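/- Let (a_n)_{n≥0} and (b_n)_{n≥1} be sequences of nonnegative reals with a_0 = 1, a_n > 0 for all n, satisfying a_m = ∑_{n=1}^m b_n a_{m−n} for all m ≥ 1, and suppose the radius of convergence of ∑ a_n t^n is at least 1. Then ∑_{n≥1} b_n = 1 if and only if ∑_{n≥0} a_n = ∞. -/

import Mathlib

open Finset Filter

/-- If a continuous function is bounded by `C` on `[0,1)`, its value at `1` is at most `C`. -/
lemma aux_cont_le {g : ℝ → ℝ} (hg : Continuous g) {C : ℝ}
    (h : ∀ t : ℝ, 0 ≤ t → t < 1 → g t ≤ C) : g 1 ≤ C := by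
  have h0 : Tendsto (fun k : ℕ => 1 / ((k : ℝ) + 1)) atTop (nhds 0) :=
    tendsto_one_div_add_atTop_nhds_zero_nat
  have hu : Tendsto (fun k : ℕ => 1 - 1 / ((k : ℝ) + 1)) atTop (nhds 1) := by
    simpa using tendsto_const_nhds.sub h0
  have hcomp := (hg.tendsto 1).comp hu
  refine le_of_tendsto hcomp ?_
  filter_upwards with k
  have hk1 : (0:ℝ) < (k : ℝ) + 1 := by positivity
  refine h _ ?_ ?_
  · have : 1 / ((k : ℝ) + 1) ≤ 1 := by
      rw [div_le_one hk1]; linarith [Nat.cast_nonneg (α := ℝ) k]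
    linarith
  · have : 0 < 1 / ((k : ℝ) + 1) := by positivity
    linarith

/-- Key identity: `A(t) = 1 + B(t) A(t)` on `[0,1)`, plus summability of `B`. -/
lemma aux_key (a b : ℕ → ℝ) (ha0 : a 0 = 1) (hapos : ∀ n, 0 < a n) (hb : ∀ n, 0 ≤ b n)
    (hconv : ∀ m : ℕ, 1 ≤ m → a m = ∑ n ∈ Finset.Icc 1 m, b n * a (m - n))
    (hradius : ∀ t : ℝ, 0 ≤ t → t < 1 → Summable fun n => a n * t ^ n)
    (t : ℝ) (ht0 : 0 ≤ t) (ht1 : t < 1) :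
    Summable (fun n => b (n + 1) * t ^ (n + 1)) ∧
      (∑' n, a n * t ^ n) = 1 + (∑' n, b (n + 1) * t ^ (n + 1)) * (∑' n, a n * t ^ n) := by
  set b' : ℕ → ℝ := fun n => if n = 0 then 0 else b n with hb'
  have hb'nonneg : ∀ n, 0 ≤ b' n := by
    intro n; simp only [hb']; split <;> [rfl; exact hb n]
  have hb'le : ∀ n, b' n ≤ a n := by
    intro n
    rcases Nat.eq_zero_or_pos n with h | h
    · simp [hb', h, (hapos 0).le]
    · have := hconv n (by omega)
      have hmem : n ∈ Finset.Icc 1 n := Finset.mem_Icc.mpr ⟨h, le_refl n⟩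
      have hsingle : b n * a (n - n) ≤ ∑ k ∈ Finset.Icc 1 n, b k * a (n - k) :=
        Finset.single_le_sum (fun i _ => mul_nonneg (hb i) (hapos _).le) hmem
      simp only [Nat.sub_self, ha0, mul_one] at hsingle
      simp only [hb', Nat.pos_iff_ne_zero.mp h, if_false]
      linarith [this]
  set f : ℕ → ℝ := fun n => b' n * t ^ n with hf
  set g : ℕ → ℝ := fun n => a n * t ^ n with hg
  have hgsum : Summable g := hradius t ht0 ht1
  have hgnonneg : ∀ n, 0 ≤ g n := fun n => mul_nonneg (hapos n).le (pow_nonneg ht0 n)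
  have hfnonneg : ∀ n, 0 ≤ f n := fun n => mul_nonneg (hb'nonneg n) (pow_nonneg ht0 n)
  have hfle : ∀ n, f n ≤ g n := fun n =>
    mul_le_mul_of_nonneg_right (hb'le n) (pow_nonneg ht0 n)
  have hfsum : Summable f := Summable.of_nonneg_of_le hfnonneg hfle hgsum
  have hfnorm : Summable fun n => ‖f n‖ := by
    simpa [Real.norm_of_nonneg (hfnonneg _)] using hfsum
  have hgnorm : Summable fun n => ‖g n‖ := by
    simpa [Real.norm_of_nonneg (hgnonneg _)] using hgsum
  -- Cauchy product
  have hcauchy := tsum_mul_tsum_eq_tsum_sum_range_of_summable_norm hfnorm hgnorm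
  have hcsum : Summable fun n => ∑ k ∈ range (n + 1), f k * g (n - k) :=
    (summable_norm_sum_mul_range_of_summable_norm hfnorm hgnorm).of_norm
  -- identify the Cauchy coefficients
  have hc : ∀ m : ℕ, 1 ≤ m → (∑ k ∈ range (m + 1), f k * g (m - k)) = g m := by
    intro m hm
    rw [Finset.sum_range_succ']
    have hf0 : f 0 = 0 := by simp [hf, hb']
    rw [hf0, zero_mul, add_zero]
    have : g m = a m * t ^ m := rfl
    rw [this, hconv m hm, Finset.sum_mul,
      show Finset.Icc 1 m = Finset.Ico 1 (m + 1) from (Finset.Ico_add_one_right_eq_Icc 1 m).symm,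
      Finset.sum_Ico_eq_sum_range]
    simp only [Nat.add_sub_cancel]
    apply Finset.sum_congr rfl
    intro i hi
    simp only [Finset.mem_range] at hi
    have hle : i + 1 ≤ m := hi
    have hpow : t ^ (i + 1) * t ^ (m - (i + 1)) = t ^ m := by
      rw [← pow_add, Nat.add_sub_cancel' hle]
    simp only [hf, hg, hb', Nat.succ_ne_zero, if_false]
    calc b' (i + 1) * t ^ (i + 1) * (a (m - (i + 1)) * t ^ (m - (i + 1)))
        = b' (i + 1) * a (m - (i + 1)) * (t ^ (i + 1) * t ^ (m - (i + 1))) := by ring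
      _ = b (1 + i) * a (m - (1 + i)) * t ^ m := by
          rw [hpow]; simp [hb', Nat.add_comm 1 i]
  -- shift sums
  have hshiftf : Summable (fun n => f (n + 1)) := (summable_nat_add_iff 1).mpr hfsum
  have hfeq : (fun n => f (n + 1)) = fun n => b (n + 1) * t ^ (n + 1) := by
    funext n; simp [hf, hb']
  have hBsum : Summable (fun n => b (n + 1) * t ^ (n + 1)) := hfeq ▸ hshiftf
  refine ⟨hBsum, ?_⟩
  have htsumf : (∑' n, f n) = ∑' n, b (n + 1) * t ^ (n + 1) := by
    rw [Summable.tsum_eq_zero_add hfsum]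
    have hf0 : f 0 = 0 := by simp [hf, hb']
    rw [hf0, zero_add, hfeq]
  have htsumc : (∑' n, ∑ k ∈ range (n + 1), f k * g (n - k)) = (∑' n, g n) - 1 := by
    rw [Summable.tsum_eq_zero_add hcsum, Summable.tsum_eq_zero_add hgsum]
    have hc0 : (∑ k ∈ range (0 + 1), f k * g (0 - k)) = 0 := by
      simp [hf, hb']
    have hg0 : g 0 = 1 := by simp [hg, ha0]
    rw [hc0, hg0, zero_add]
    have : (fun n => ∑ k ∈ range (n + 1 + 1), f k * g (n + 1 - k)) =
        fun n => g (n + 1) := by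
      funext n; exact hc (n + 1) (Nat.succ_le_succ (Nat.zero_le n))
    rw [this]; ring
  have := hcauchy
  rw [htsumc, htsumf] at this
  linarith [this]

/-- With `a₀ = 1`, `aₙ > 0`, `bₙ ≥ 0`, the convolution relation
`aₘ = ∑_{n=1}^m bₙ a_{m-n}` for all `m ≥ 1`, and radius of convergence of
`∑ aₙ tⁿ` at least `1`, one has `∑_{n≥1} bₙ = 1` if and only if `∑ aₙ = ∞`. -/
theorem stmt_2 (a b : ℕ → ℝ) (ha0 : a 0 = 1) (hapos : ∀ n, 0 < a n) (hb : ∀ n, 0 ≤ b n)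
    (hconv : ∀ m : ℕ, 1 ≤ m → a m = ∑ n ∈ Finset.Icc 1 m, b n * a (m - n))
    (hradius : ∀ t : ℝ, 0 ≤ t → t < 1 → Summable fun n => a n * t ^ n) :
    (∑' n : ℕ, b (n + 1)) = 1 ↔ ¬ Summable a := by
  -- abbreviations
  have key := aux_key a b ha0 hapos hb hconv hradius
  -- A t ≥ 1
  have hAge : ∀ t : ℝ, 0 ≤ t → t < 1 → 1 ≤ ∑' n, a n * t ^ n := by
    intro t ht0 ht1
    have hsum := hradius t ht0 ht1
    have := Summable.le_tsum hsum 0 (fun j _ => mul_nonneg (hapos j).le (pow_nonneg ht0 j))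
    simpa [ha0] using this
  -- B t < 1 and A t * (1 - B t) = 1
  have hABeq : ∀ t : ℝ, 0 ≤ t → t < 1 →
      (∑' n, a n * t ^ n) * (1 - ∑' n, b (n + 1) * t ^ (n + 1)) = 1 := by
    intro t ht0 ht1
    have := (key t ht0 ht1).2
    linear_combination this
  constructor
  · -- ∑ b = 1 → ¬ Summable a
    intro hbsum ha
    have hSa : (1:ℝ) ≤ ∑' n, a n := by
      have := Summable.le_tsum ha 0 (fun j _ => (hapos j).le)
      simpa [ha0] using this
    have hSapos : (0:ℝ) < ∑' n, a n := by linarith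
    -- B t ≤ 1 - 1/Sa on [0,1)
    have hBle : ∀ t : ℝ, 0 ≤ t → t < 1 →
        (∑' n, b (n + 1) * t ^ (n + 1)) ≤ 1 - 1 / (∑' n, a n) := by
      intro t ht0 ht1
      have hAle : (∑' n, a n * t ^ n) ≤ ∑' n, a n := by
        refine Summable.tsum_le_tsum (fun n => ?_) (hradius t ht0 ht1) ha
        have : t ^ n ≤ 1 := pow_le_one₀ ht0 ht1.le
        nlinarith [(hapos n).le]
      have heq := hABeq t ht0 ht1
      have hApos : (0:ℝ) < ∑' n, a n * t ^ n := lt_of_lt_of_le one_pos (hAge t ht0 ht1)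
      have h1 : 1 - (∑' n, b (n + 1) * t ^ (n + 1)) = 1 / (∑' n, a n * t ^ n) := by
        field_simp at heq ⊢
        linarith [heq]
      have h2 : 1 / (∑' n, a n) ≤ 1 / (∑' n, a n * t ^ n) :=
        one_div_le_one_div_of_le hApos hAle
      linarith [h1, h2]
    -- partial sums of b bounded by 1 - 1/Sa
    have hpart : ∀ N : ℕ, (∑ n ∈ range N, b (n + 1)) ≤ 1 - 1 / (∑' n, a n) := by
      intro N
      have hcont : Continuous (fun t : ℝ => ∑ n ∈ range N, b (n + 1) * t ^ (n + 1)) :=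
        continuous_finset_sum _ fun i _ => continuous_const.mul (continuous_pow _)
      have hbound : ∀ t : ℝ, 0 ≤ t → t < 1 →
          (∑ n ∈ range N, b (n + 1) * t ^ (n + 1)) ≤ 1 - 1 / (∑' n, a n) := by
        intro t ht0 ht1
        have hsum := (key t ht0 ht1).1
        have hle : (∑ n ∈ range N, b (n + 1) * t ^ (n + 1)) ≤
            ∑' n, b (n + 1) * t ^ (n + 1) :=
          Summable.sum_le_tsum (range N)
            (fun i _ => mul_nonneg (hb _) (pow_nonneg ht0 _)) hsum
        linarith [hBle t ht0 ht1]
      have := aux_cont_le hcont hbound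
      simpa using this
    have hbsummable : Summable (fun n => b (n + 1)) :=
      summable_of_sum_range_le (fun n => hb _) hpart
    have : (∑' n, b (n + 1)) ≤ 1 - 1 / (∑' n, a n) :=
      Summable.tsum_le_of_sum_range_le hbsummable hpart
    rw [hbsum] at this
    have : 1 / (∑' n, a n) ≤ 0 := by linarith
    have : (0:ℝ) < 1 / (∑' n, a n) := by positivity
    linarith
  · -- ¬ Summable a → ∑ b = 1
    intro hns
    -- B t < 1 for t ∈ [0,1)
    have hBlt : ∀ t : ℝ, 0 ≤ t → t < 1 → (∑' n, b (n + 1) * t ^ (n + 1)) < 1 := by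
      intro t ht0 ht1
      have heq := hABeq t ht0 ht1
      have hApos : (0:ℝ) < ∑' n, a n * t ^ n := lt_of_lt_of_le one_pos (hAge t ht0 ht1)
      nlinarith [heq, hApos]
    -- partial sums of b bounded by 1
    have hpart : ∀ N : ℕ, (∑ n ∈ range N, b (n + 1)) ≤ 1 := by
      intro N
      have hcont : Continuous (fun t : ℝ => ∑ n ∈ range N, b (n + 1) * t ^ (n + 1)) :=
        continuous_finset_sum _ fun i _ => continuous_const.mul (continuous_pow _)
      have hbound : ∀ t : ℝ, 0 ≤ t → t < 1 →
          (∑ n ∈ range N, b (n + 1) * t ^ (n + 1)) ≤ 1 := by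
        intro t ht0 ht1
        have hsum := (key t ht0 ht1).1
        have hle : (∑ n ∈ range N, b (n + 1) * t ^ (n + 1)) ≤
            ∑' n, b (n + 1) * t ^ (n + 1) :=
          Summable.sum_le_tsum (range N)
            (fun i _ => mul_nonneg (hb _) (pow_nonneg ht0 _)) hsum
        linarith [hBlt t ht0 ht1]
      have := aux_cont_le hcont hbound
      simpa using this
    have hbsummable : Summable (fun n => b (n + 1)) :=
      summable_of_sum_range_le (fun n => hb _) hpart
    have hSble : (∑' n, b (n + 1)) ≤ 1 :=
      Summable.tsum_le_of_sum_range_le hbsummable hpart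
    by_contra hne
    have hSblt : (∑' n, b (n + 1)) < 1 := lt_of_le_of_ne hSble hne
    set S := ∑' n, b (n + 1) with hS
    -- A t ≤ 1/(1-S)
    have hAle : ∀ t : ℝ, 0 ≤ t → t < 1 → (∑' n, a n * t ^ n) ≤ 1 / (1 - S) := by
      intro t ht0 ht1
      have hBleS : (∑' n, b (n + 1) * t ^ (n + 1)) ≤ S := by
        refine Summable.tsum_le_tsum (fun n => ?_) (key t ht0 ht1).1 hbsummable
        have : t ^ (n + 1) ≤ 1 := pow_le_one₀ ht0 ht1.le
        nlinarith [hb (n + 1)]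
      have heq := hABeq t ht0 ht1
      have hApos : (0:ℝ) < ∑' n, a n * t ^ n := lt_of_lt_of_le one_pos (hAge t ht0 ht1)
      have h1S : (0:ℝ) < 1 - S := by linarith
      rw [le_div_iff₀ h1S]
      nlinarith [heq]
    -- partial sums of a bounded
    have hpartA : ∀ N : ℕ, (∑ n ∈ range N, a n) ≤ 1 / (1 - S) := by
      intro N
      have hcont : Continuous (fun t : ℝ => ∑ n ∈ range N, a n * t ^ n) :=
        continuous_finset_sum _ fun i _ => continuous_const.mul (continuous_pow _)
      have hbound : ∀ t : ℝ, 0 ≤ t → t < 1 →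
          (∑ n ∈ range N, a n * t ^ n) ≤ 1 / (1 - S) := by
        intro t ht0 ht1
        have hle : (∑ n ∈ range N, a n * t ^ n) ≤ ∑' n, a n * t ^ n :=
          Summable.sum_le_tsum (range N)
            (fun i _ => mul_nonneg (hapos _).le (pow_nonneg ht0 _)) (hradius t ht0 ht1)
        linarith [hAle t ht0 ht1]
      have := aux_cont_le hcont hbound
      simpa using this
    exact hns (summable_of_sum_range_le (fun n => (hapos n).le) hpartA)
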